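/- If the nature-state set N is finite, then every multi-leximin action is a safety-level action. -/

import Mathlib

/-- The safety level: `sup_{a ∈ A} inf_{η ∈ N} u(a,η)`, in the extended reals. -/
noncomputable def safetyLevel {A N : Type*} (u : A → N → ℝ) : EReal :=
  ⨆ a : A, ⨅ η : N, (u a η : EReal)

/-- The vector (as a list) of the utilities `(u(a,η))_{η ∈ N}` of action `a`,
rearranged in nondecreasing order (`N` finite). -/
noncomputable def sVec {A N : Type*} [Fintype N] (u : A → N → ℝ) (a : A) : List ℝ :=
  (Finset.univ.val.map (u a)).sort (· ≤ ·)

/-- An action `a` is multi-leximin if its nondecreasingly sorted utility vector is greater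
than or equal to that of every other action in the lexicographic order. -/
def MultiLeximin {A N : Type*} [Fintype N] (u : A → N → ℝ) (a : A) : Prop :=
  ∀ a' : A, sVec u a' = sVec u a ∨ List.Lex (· < ·) (sVec u a') (sVec u a)

lemma sVec_mem' {A N : Type*} [Fintype N] (u : A → N → ℝ) (a : A) (η : N) :
    u a η ∈ sVec u a := by
  unfold sVec
  rw [Multiset.mem_sort]
  exact Multiset.mem_map_of_mem _ (Finset.mem_univ _)

lemma sVec_ne_nil' {A N : Type*} [Fintype N] [Nonempty N] (u : A → N → ℝ) (a : A) :
    sVec u a ≠ [] := by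
  intro hnil
  have := sVec_mem' u a (Classical.arbitrary N)
  simp [hnil] at this

lemma mem_sVec' {A N : Type*} [Fintype N] (u : A → N → ℝ) (a : A) {x : ℝ}
    (hx : x ∈ sVec u a) : ∃ η, u a η = x := by
  unfold sVec at hx
  rw [Multiset.mem_sort] at hx
  obtain ⟨η, _, hη⟩ := Multiset.mem_map.mp hx
  exact ⟨η, hη⟩

lemma sVec_sorted' {A N : Type*} [Fintype N] (u : A → N → ℝ) (a : A) :
    (sVec u a).Pairwise (· ≤ ·) := Multiset.pairwise_sort _ _

lemma headI_mem' {l : List ℝ} (h : l ≠ []) : l.headI ∈ l := by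
  cases l with
  | nil => exact absurd rfl h
  | cons b t => exact List.mem_cons_self

lemma headI_le_of_sorted' {l : List ℝ} (hl : l.Pairwise (· ≤ ·)) {x : ℝ} (hx : x ∈ l) :
    l.headI ≤ x := by
  cases l with
  | nil => simp at hx
  | cons b t =>
    rcases List.mem_cons.mp hx with rfl | hx
    · exact le_rfl
    · exact (List.pairwise_cons.mp hl).1 x hx

lemma lex_headI' {l₁ l₂ : List ℝ} (h : List.Lex (· < ·) l₁ l₂) (h1 : l₁ ≠ []) :
    l₁.headI ≤ l₂.headI := by
  cases h with
  | nil => exact absurd rfl h1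
  | cons h' => exact le_rfl
  | rel hab => exact le_of_lt hab

/-- if the nature-state set is finite, every multi-leximin action is a
safety-level action. -/
theorem multiLeximin_safety {A N : Type*} [Nonempty A] [Fintype N] [Nonempty N]
    (u : A → N → ℝ) (a : A) (h : MultiLeximin u a) :
    ∀ η : N, safetyLevel u ≤ (u a η : EReal) := by
  intro η
  refine iSup_le fun a' => ?_
  have h1 : sVec u a' ≠ [] := sVec_ne_nil' u a'
  obtain ⟨η0, hη0⟩ := mem_sVec' u a' (headI_mem' h1)
  have hd_le : (sVec u a').headI ≤ (sVec u a).headI := by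
    rcases h a' with heq | hlex
    · exact le_of_eq (by rw [heq])
    · exact lex_headI' hlex h1
  have ha : (sVec u a).headI ≤ u a η := headI_le_of_sorted' (sVec_sorted' u a) (sVec_mem' u a η)
  calc ⨅ η' : N, (u a' η' : EReal) ≤ (u a' η0 : EReal) := iInf_le _ η0
    _ ≤ (u a η : EReal) := by
        rw [EReal.coe_le_coe_iff, hη0]
        exact le_trans hd_le ha
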